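/- Let A be an N×N real matrix with nonnegative entries, β ≥ 0 with β · max_i ∑_j A_{ij} < 1, and α ∈ ℝ. Partition the index set as V = R ∪ S with R and S disjoint, and let x = α (I − β A)^{-1} 𝟙 be the equilibrium action vector of the full network with restrictions x_R, x_S. Then the change in the surviving agents' equilibrium actions when the agents in S are removed is exactly x_R − α (I − β A_{RR})^{-1} 𝟙_R = β (I − β A_{RR})^{-1} A_{RS} x_S; in particular, if α ≥ 0 this change is entrywise nonnegative. -/
import Mathlib

open Matrix

/-- Principal submatrix of `A` indexed by the subset `S` (e.g. the block `A_{RR}`). -/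
def psub {N : ℕ} (A : Matrix (Fin N) (Fin N) ℝ) (S : Finset (Fin N)) :
    Matrix {i // i ∈ S} {i // i ∈ S} ℝ :=
  Matrix.of fun i j => A i.1 j.1

/-- Off-diagonal block `A_{RS}` of `A` for subsets `R`, `S`. -/
def pblock {N : ℕ} (A : Matrix (Fin N) (Fin N) ℝ) (R S : Finset (Fin N)) :
    Matrix {i // i ∈ R} {j // j ∈ S} ℝ :=
  Matrix.of fun i j => A i.1 j.1

section Aux

attribute [local instance] Matrix.linftyOpNormedRing Matrix.linftyOpNormedAlgebra

variable {m : Type*} [Fintype m] [DecidableEq m]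

lemma aux_norm_lt_one (M : Matrix m m ℝ) (h0 : ∀ i j, 0 ≤ M i j)
    (h1 : ∀ i, ∑ j, M i j < 1) : ‖M‖ < 1 := by
  have key : ∀ i, (∑ j, ‖M i j‖₊ : NNReal) < 1 := by
    intro i
    rw [← NNReal.coe_lt_coe]
    push_cast
    calc ∑ j, (‖M i j‖₊ : ℝ) = ∑ j, M i j := by
          refine Finset.sum_congr rfl fun j _ => ?_
          rw [coe_nnnorm, Real.norm_eq_abs, abs_of_nonneg (h0 i j)]
      _ < 1 := h1 i
  rw [Matrix.linfty_opNorm_def, ← NNReal.coe_one, NNReal.coe_lt_coe]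
  exact (Finset.sup_lt_iff (by norm_num)).mpr fun i _ => key i

lemma aux_pow_nonneg (M : Matrix m m ℝ) (h0 : ∀ i j, 0 ≤ M i j) (n : ℕ) :
    ∀ i j, 0 ≤ (M ^ n) i j := by
  induction n with
  | zero =>
    intro i j
    simp only [pow_zero, Matrix.one_apply]
    split <;> norm_num
  | succ n ih =>
    intro i j
    rw [pow_succ, Matrix.mul_apply]
    exact Finset.sum_nonneg fun k _ => mul_nonneg (ih i k) (h0 k j)

lemma aux_unit_inv_nonneg (M : Matrix m m ℝ) (h0 : ∀ i j, 0 ≤ M i j)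
    (h1 : ∀ i, ∑ j, M i j < 1) :
    IsUnit (1 - M) ∧ ∀ i j, 0 ≤ (1 - M)⁻¹ i j := by
  haveI : CompleteSpace (Matrix m m ℝ) := FiniteDimensional.complete ℝ _
  have hn : ‖M‖ < 1 := aux_norm_lt_one M h0 h1
  have hu : IsUnit (1 - M) := isUnit_one_sub_of_norm_lt_one hn
  refine ⟨hu, ?_⟩
  have hsum : HasSum (fun n : ℕ => M ^ n) (Ring.inverse (1 - M)) :=
    hasSum_geom_series_inverse M hn
  rw [← Matrix.nonsing_inv_eq_ringInverse] at hsum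
  intro i j
  let e : Matrix m m ℝ →ₗ[ℝ] ℝ :=
    { toFun := fun B => B i j
      map_add' := fun B C => rfl
      map_smul' := fun c B => rfl }
  have hsum' : HasSum (fun n : ℕ => (M ^ n) i j) ((1 - M)⁻¹ i j) :=
    (LinearMap.toContinuousLinearMap e).hasSum hsum
  exact hsum'.nonneg fun n => aux_pow_nonneg M h0 n i j

end Aux


lemma aux_entry_sub_mulVec {m : Type*} [Fintype m] [DecidableEq m]
    (M : Matrix m m ℝ) (v : m → ℝ) (β : ℝ) (i : m) :
    ((1 - β • M) *ᵥ v) i = v i - β * ∑ j, M i j * v j := by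
  rw [Matrix.sub_mulVec, Matrix.smul_mulVec]
  simp [Matrix.mulVec, dotProduct, Matrix.one_mulVec, Finset.mul_sum]

/-- The change in the surviving agents' equilibrium actions when the agents in `S`
are removed equals `β (I - β A_{RR})⁻¹ A_{RS} x_S`; if `α ≥ 0` it is entrywise
nonnegative. -/
theorem activity_change_on_removal {N : ℕ} (A : Matrix (Fin N) (Fin N) ℝ) (β α : ℝ)
    (hA : ∀ i j, 0 ≤ A i j) (hβ : 0 ≤ β) (hrow : ∀ i, β * ∑ j, A i j < 1)
    (R S : Finset (Fin N)) (hdisj : Disjoint R S) (hcover : R ∪ S = Finset.univ)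
    (x : Fin N → ℝ) (hx : x = α • ((1 - β • A)⁻¹ *ᵥ fun _ => 1)) :
    ((fun i : {i // i ∈ R} => x i.1) - α • ((1 - β • psub A R)⁻¹ *ᵥ fun _ => 1)) =
        β • ((1 - β • psub A R)⁻¹ *ᵥ
          (pblock A R S *ᵥ fun j : {j // j ∈ S} => x j.1)) ∧
      (0 ≤ α → ∀ i : {i // i ∈ R},
        0 ≤ (x i.1 - (α • ((1 - β • psub A R)⁻¹ *ᵥ fun _ => (1 : ℝ))) i)) := by
  classical
  -- properties of β • A
  have h0A : ∀ i j, 0 ≤ (β • A) i j := fun i j =>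
    mul_nonneg hβ (hA i j)
  have h1A : ∀ i, ∑ j, (β • A) i j < 1 := by
    intro i
    have : ∑ j, (β • A) i j = β * ∑ j, A i j := by
      simp [Matrix.smul_apply, Finset.mul_sum]
    rw [this]; exact hrow i
  obtain ⟨huA, hinvA⟩ := aux_unit_inv_nonneg (β • A) h0A h1A
  -- properties of β • psub A R
  have h0R : ∀ i j, 0 ≤ (β • psub A R) i j := fun i j =>
    mul_nonneg hβ (hA i.1 j.1)
  have h1R : ∀ i : {i // i ∈ R}, ∑ j, (β • psub A R) i j < 1 := by
    intro i
    have h1 : ∑ j : {j // j ∈ R}, (β • psub A R) i j = β * ∑ j ∈ R, A i.1 j := by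
      rw [Finset.mul_sum, ← Finset.sum_coe_sort R (fun j => β * A i.1 j)]
      rfl
    rw [h1]
    have h2 : ∑ j ∈ R, A i.1 j ≤ ∑ j, A i.1 j :=
      Finset.sum_le_sum_of_subset_of_nonneg (Finset.subset_univ R)
        (fun j _ _ => hA i.1 j)
    calc β * ∑ j ∈ R, A i.1 j ≤ β * ∑ j, A i.1 j := by
          exact mul_le_mul_of_nonneg_left h2 hβ
      _ < 1 := hrow i.1
  obtain ⟨huR, hinvR⟩ := aux_unit_inv_nonneg (β • psub A R) h0R h1R
  have hdetA : IsUnit (1 - β • A).det := (Matrix.isUnit_iff_isUnit_det _).mp huA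
  have hdetR : IsUnit (1 - β • psub A R).det := (Matrix.isUnit_iff_isUnit_det _).mp huR
  -- equilibrium equation for x
  have hxeq : (1 - β • A) *ᵥ x = fun _ => α := by
    rw [hx, Matrix.mulVec_smul, Matrix.mulVec_mulVec, Matrix.mul_nonsing_inv _ hdetA,
      Matrix.one_mulVec]
    funext i
    simp
  have hxcomp : ∀ i, x i = α + β * ∑ j, A i j * x j := by
    intro i
    have h := congrFun hxeq i
    rw [aux_entry_sub_mulVec] at h
    linarith [h]
  -- restricted vectors
  set y : {i // i ∈ R} → ℝ := fun i => x i.1 with hy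
  set z : {j // j ∈ S} → ℝ := fun j => x j.1 with hz
  -- block equation
  have hblock : (1 - β • psub A R) *ᵥ y =
      (fun _ => α) + β • (pblock A R S *ᵥ z) := by
    funext i
    have hsplit : ∑ j, A i.1 j * x j =
        (∑ j ∈ R, A i.1 j * x j) + ∑ j ∈ S, A i.1 j * x j := by
      rw [← Finset.sum_union hdisj, hcover]
    have hR' : ∑ j : {j // j ∈ R}, A i.1 j.1 * x j.1 = ∑ j ∈ R, A i.1 j * x j :=
      Finset.sum_coe_sort R (fun j => A i.1 j * x j)
    have hS' : ∑ j : {j // j ∈ S}, A i.1 j.1 * x j.1 = ∑ j ∈ S, A i.1 j * x j :=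
      Finset.sum_coe_sort S (fun j => A i.1 j * x j)
    have hxi := hxcomp i.1
    rw [aux_entry_sub_mulVec]
    simp only [Pi.add_apply, Pi.smul_apply, smul_eq_mul, Matrix.mulVec,
      dotProduct, psub, pblock, Matrix.of_apply, hy, hz]
    rw [hR', hS']
    rw [hsplit] at hxi
    linarith [hxi]
  -- solve for y
  have hysol : y = α • ((1 - β • psub A R)⁻¹ *ᵥ fun _ => 1) +
      β • ((1 - β • psub A R)⁻¹ *ᵥ (pblock A R S *ᵥ z)) := by
    have h1 : (1 - β • psub A R)⁻¹ *ᵥ ((1 - β • psub A R) *ᵥ y) = y := by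
      rw [Matrix.mulVec_mulVec, Matrix.nonsing_inv_mul _ hdetR, Matrix.one_mulVec]
    rw [← h1, hblock, Matrix.mulVec_add, Matrix.mulVec_smul,
      show (fun _ : {i // i ∈ R} => α) = α • (fun _ => (1 : ℝ)) by funext i; simp,
      Matrix.mulVec_smul]
  have hmain : ((fun i : {i // i ∈ R} => x i.1) -
      α • ((1 - β • psub A R)⁻¹ *ᵥ fun _ => 1)) =
      β • ((1 - β • psub A R)⁻¹ *ᵥ (pblock A R S *ᵥ z)) := by
    rw [show (fun i : {i // i ∈ R} => x i.1) = y from rfl, hysol]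
    abel
  refine ⟨hmain, ?_⟩
  intro hα i
  have hxnn : ∀ j, 0 ≤ x j := by
    intro j
    rw [hx]
    simp only [Pi.smul_apply, smul_eq_mul]
    refine mul_nonneg hα ?_
    unfold Matrix.mulVec dotProduct
    exact Finset.sum_nonneg fun k _ => by
      simpa using mul_nonneg (hinvA j k) zero_le_one
  have hrhs : 0 ≤ (β • ((1 - β • psub A R)⁻¹ *ᵥ (pblock A R S *ᵥ z))) i := by
    simp only [Pi.smul_apply, smul_eq_mul]
    refine mul_nonneg hβ ?_
    unfold Matrix.mulVec dotProduct
    refine Finset.sum_nonneg fun k _ => mul_nonneg (hinvR i k) ?_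
    exact Finset.sum_nonneg fun l _ => mul_nonneg (hA k.1 l.1) (hxnn l.1)
  have := congrFun hmain i
  simp only [Pi.sub_apply] at this
  linarith [this, hrhs]
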